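/- Let G ⊆ [0,1]^d and let B be a countable collection of dyadic cubes in [0,1]^d such that 3Q ∩ G ≠ ∅ for every Q ∈ B, and such that each x ∈ G is contained in at most N different cubes 7Q with Q ∈ B. Then there exist disjoint subcollections 𝒜₁, …, 𝒜_N of B such that B = 𝒜₁ ∪ 𝒜₂ ∪ … ∪ 𝒜_N and such that for every i ∈ {1,…,N}, any two distinct cubes Q, R ∈ 𝒜_i satisfy 3Q ∩ 3R = ∅. -/

import Mathlib

open Metric

noncomputable section

/-- The closed unit cube `[0,1]^d` in Euclidean space. -/
def unitCube (d : ℕ) : Set (EuclideanSpace ℝ (Fin d)) := {x | ∀ i, 0 ≤ x i ∧ x i ≤ 1}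

/-- The dyadic cube `Q = Π_i [a_i·2^{-k}, (a_i+1)·2^{-k})`. -/
def dyCube (d k : ℕ) (a : Fin d → ℕ) : Set (EuclideanSpace ℝ (Fin d)) :=
  {x | ∀ i, (a i : ℝ) * 2 ^ (-(k : ℤ)) ≤ x i ∧ x i < ((a i : ℝ) + 1) * 2 ^ (-(k : ℤ))}

/-- The tripled dyadic cube `3Q = Π_i [(a_i-1)·2^{-k}, (a_i+2)·2^{-k})`. -/
def dyCube3 (d k : ℕ) (a : Fin d → ℕ) : Set (EuclideanSpace ℝ (Fin d)) :=
  {x | ∀ i, ((a i : ℝ) - 1) * 2 ^ (-(k : ℤ)) ≤ x i ∧ x i < ((a i : ℝ) + 2) * 2 ^ (-(k : ℤ))}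

/-- The septupled dyadic cube `7Q = Π_i [(a_i-3)·2^{-k}, (a_i+4)·2^{-k})`. -/
def dyCube7 (d k : ℕ) (a : Fin d → ℕ) : Set (EuclideanSpace ℝ (Fin d)) :=
  {x | ∀ i, ((a i : ℝ) - 3) * 2 ^ (-(k : ℤ)) ≤ x i ∧ x i < ((a i : ℝ) + 4) * 2 ^ (-(k : ℤ))}

/-- `sparse(E, 7Q) = sup { dist(x, 7Q ∩ E) : x ∈ 7Q } / side(7Q)` with `side(7Q) = 7·2^{-k}`. -/
def sparse7 {d : ℕ} (E : Set (EuclideanSpace ℝ (Fin d))) (k : ℕ) (a : Fin d → ℕ) : ℝ :=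
  (⨆ x : (dyCube7 d k a),
    Metric.infDist (x : EuclideanSpace ℝ (Fin d)) (dyCube7 d k a ∩ E)) / (7 * 2 ^ (-(k : ℤ)))

/-- An index for a dyadic cube of `[0,1]^d`: a scale `k` and a corner `a : Fin d → Fin (2^k)`. -/
abbrev DyIdx (d : ℕ) := Σ k : ℕ, Fin d → Fin (2 ^ k)

/-- The tripled cube of an indexed dyadic cube. -/
def idx3 {d : ℕ} (q : DyIdx d) : Set (EuclideanSpace ℝ (Fin d)) :=
  dyCube3 d q.1 (fun i => (q.2 i : ℕ))

/-- The septupled cube of an indexed dyadic cube. -/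
def idx7 {d : ℕ} (q : DyIdx d) : Set (EuclideanSpace ℝ (Fin d)) :=
  dyCube7 d q.1 (fun i => (q.2 i : ℕ))

/-! ### Auxiliary machinery for the coloring lemma -/

/-- number of dyadic cubes of scales `< k`. -/
def scaleOffset (d k : ℕ) : ℕ := ∑ j ∈ Finset.range k, (2 ^ j) ^ d

/-- A global index on dyadic cubes, ordered by scale first. -/
noncomputable def phiIdx {d : ℕ} (q : DyIdx d) : ℕ :=
  scaleOffset d q.1 + (Fintype.equivFin (Fin d → Fin (2 ^ q.1)) q.2 : ℕ)

lemma scaleOffset_mono (d : ℕ) {k k' : ℕ} (h : k ≤ k') :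
    scaleOffset d k ≤ scaleOffset d k' :=
  Finset.sum_le_sum_of_subset (Finset.range_subset_range.2 h)

lemma phiIdx_lt_scaleOffset {d : ℕ} (q : DyIdx d) :
    phiIdx q < scaleOffset d (q.1 + 1) := by
  have h : ((Fintype.equivFin (Fin d → Fin (2 ^ q.1)) q.2 : ℕ)) <
      Fintype.card (Fin d → Fin (2 ^ q.1)) := (Fintype.equivFin _ q.2).2
  have hc : Fintype.card (Fin d → Fin (2 ^ q.1)) = (2 ^ q.1) ^ d := by
    simp [Fintype.card_fun]
  rw [scaleOffset, Finset.sum_range_succ]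
  have h' : ((Fintype.equivFin (Fin d → Fin (2 ^ q.1)) q.2 : ℕ)) < (2 ^ q.1) ^ d := hc ▸ h
  unfold phiIdx scaleOffset
  omega

lemma phiIdx_lt_of_scale_lt {d : ℕ} {q q' : DyIdx d} (h : q.1 < q'.1) :
    phiIdx q < phiIdx q' := by
  calc phiIdx q < scaleOffset d (q.1 + 1) := phiIdx_lt_scaleOffset q
    _ ≤ scaleOffset d q'.1 := scaleOffset_mono d h
    _ ≤ phiIdx q' := Nat.le_add_right _ _

lemma scale_le_of_phiIdx_lt {d : ℕ} {q q' : DyIdx d} (h : phiIdx q < phiIdx q') :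
    q.1 ≤ q'.1 := by
  by_contra hc
  exact absurd (phiIdx_lt_of_scale_lt (not_le.1 hc)) (by omega)

lemma phiIdx_injective {d : ℕ} : Function.Injective (phiIdx (d := d)) := by
  intro q q' h
  have hk : q.1 = q'.1 := by
    rcases lt_trichotomy q.1 q'.1 with h1 | h1 | h1
    · exact absurd (phiIdx_lt_of_scale_lt h1) (by omega)
    · exact h1
    · exact absurd (phiIdx_lt_of_scale_lt h1) (by omega)
  obtain ⟨k, a⟩ := q
  obtain ⟨k', a'⟩ := q'
  cases hk
  simp only [phiIdx, Nat.add_right_cancel_iff] at h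
  have : (Fintype.equivFin (Fin d → Fin (2 ^ k)) a) =
      (Fintype.equivFin (Fin d → Fin (2 ^ k)) a') := Fin.ext (by omega)
  exact congrArg _ ((Fintype.equivFin _).injective this)

lemma k_le_scaleOffset (d k : ℕ) : k ≤ scaleOffset d k := by
  calc k = ∑ _j ∈ Finset.range k, 1 := by simp
    _ ≤ _ := Finset.sum_le_sum fun j _ => Nat.one_le_pow _ _ (Nat.pow_pos (by norm_num))

lemma finite_phiIdx_lt {d : ℕ} (n : ℕ) : {q : DyIdx d | phiIdx q < n}.Finite := by
  have hsub : {q : DyIdx d | phiIdx q < n} ⊆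
      ⋃ k ∈ Finset.range n, (Sigma.mk k '' Set.univ) := by
    intro q hq
    have hk : q.1 < n := by
      have h1 := k_le_scaleOffset d q.1
      have h2 : scaleOffset d q.1 ≤ phiIdx q := Nat.le_add_right _ _
      have h3 : phiIdx q < n := hq
      omega
    simp only [Set.mem_iUnion]
    exact ⟨q.1, by simpa using hk, q.2, trivial, by rfl⟩
  exact Set.Finite.subset
    (Set.Finite.biUnion (Finset.range n).finite_toSet fun k _ => Set.finite_univ.image _) hsub

lemma idx3_subset_idx7_self {d : ℕ} (q : DyIdx d) : idx3 q ⊆ idx7 q := by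
  intro y hy i
  have ht : (0:ℝ) < 2 ^ (-(q.1 : ℤ)) := by positivity
  have h := hy i
  constructor
  · calc (((q.2 i : ℕ) : ℝ) - 3) * 2 ^ (-(q.1 : ℤ)) ≤
        (((q.2 i : ℕ) : ℝ) - 1) * 2 ^ (-(q.1 : ℤ)) := by nlinarith
      _ ≤ y i := h.1
  · calc y i < (((q.2 i : ℕ) : ℝ) + 2) * 2 ^ (-(q.1 : ℤ)) := h.2
      _ ≤ (((q.2 i : ℕ) : ℝ) + 4) * 2 ^ (-(q.1 : ℤ)) := by nlinarith

/-- If `q'` is at ((q.2 i : ℕ) : ℝ) coarser (or equal) scale than `q` and `3q ∩ 3q' ≠ ∅`, then `3q ⊆ 7q'`. -/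
lemma idx3_subset_idx7_of_le {d : ℕ} {q q' : DyIdx d} (hk : q'.1 ≤ q.1)
    (hne : (idx3 q ∩ idx3 q').Nonempty) : idx3 q ⊆ idx7 q' := by
  obtain ⟨x, hx, hx'⟩ := hne
  intro y hy i
  have hxi := hx i
  have hxi' := hx' i
  have hyi := hy i
  set k : ℕ := q.1 with hkdef
  set k' : ℕ := q'.1 with hk'def
  set m : ℕ := k - k' with hmdef
  have ht : (0:ℝ) < 2 ^ (-(k : ℤ)) := by positivity
  have hsplit : (2:ℝ) ^ (-(k' : ℤ)) = 2 ^ m * 2 ^ (-(k : ℤ)) := by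
    rw [← zpow_natCast (2:ℝ) m, ← zpow_add₀ (by norm_num : (2:ℝ) ≠ 0)]
    congr 1
    omega
  have hM : (1:ℝ) ≤ 2 ^ m := one_le_pow₀ (by norm_num)
  -- real strict inequalities from the common point x
  have h1 : (((q.2 i : ℕ) : ℝ) - 1) * 2 ^ (-(k : ℤ)) < ((((q'.2 i : ℕ) : ℝ) + 2) * 2 ^ m) * 2 ^ (-(k : ℤ)) := by
    have e : (((q'.2 i : ℕ) : ℝ) + 2) * 2 ^ (-(k' : ℤ)) = ((((q'.2 i : ℕ) : ℝ) + 2) * 2 ^ m) * 2 ^ (-(k : ℤ)) := by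
      rw [hsplit]; ring
    have := lt_of_le_of_lt hxi.1 hxi'.2
    linarith [this, e.symm.le, e.le]
  have h2 : ((((q'.2 i : ℕ) : ℝ) - 1) * 2 ^ m) * 2 ^ (-(k : ℤ)) < (((q.2 i : ℕ) : ℝ) + 2) * 2 ^ (-(k : ℤ)) := by
    have e : (((q'.2 i : ℕ) : ℝ) - 1) * 2 ^ (-(k' : ℤ)) = ((((q'.2 i : ℕ) : ℝ) - 1) * 2 ^ m) * 2 ^ (-(k : ℤ)) := by
      rw [hsplit]; ring
    have := lt_of_le_of_lt hxi'.1 hxi.2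
    linarith [this, e.le, e.symm.le]
  have h1' : ((q.2 i : ℕ) : ℝ) - 1 < (((q'.2 i : ℕ) : ℝ) + 2) * 2 ^ m := lt_of_mul_lt_mul_right h1 ht.le
  have h2' : (((q'.2 i : ℕ) : ℝ) - 1) * 2 ^ m < ((q.2 i : ℕ) : ℝ) + 2 := lt_of_mul_lt_mul_right h2 ht.le
  -- additive real forms
  have r1 : ((q.2 i : ℕ) : ℝ) < ((q'.2 i : ℕ) : ℝ) * 2 ^ m + 2 * 2 ^ m + 1 := by nlinarith [h1']
  have r2 : ((q'.2 i : ℕ) : ℝ) * 2 ^ m < ((q.2 i : ℕ) : ℝ) + 2 + 2 ^ m := by nlinarith [h2']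
  -- pass to naturals to use integrality
  have n1 : (q.2 i : ℕ) < (q'.2 i : ℕ) * 2 ^ m + 2 * 2 ^ m + 1 := by
    exact_mod_cast r1
  have n2 : (q'.2 i : ℕ) * 2 ^ m < (q.2 i : ℕ) + 2 + 2 ^ m := by
    exact_mod_cast r2
  have n1' : (q.2 i : ℕ) + 1 ≤ (q'.2 i : ℕ) * 2 ^ m + 2 * 2 ^ m + 1 := n1
  have n2' : (q'.2 i : ℕ) * 2 ^ m + 1 ≤ (q.2 i : ℕ) + 2 + 2 ^ m := n2
  -- back to reals
  have rn1 : ((q.2 i : ℕ) : ℝ) + 1 ≤ ((q'.2 i : ℕ) : ℝ) * 2 ^ m + 2 * 2 ^ m + 1 := by exact_mod_cast n1'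
  have rn2 : ((q'.2 i : ℕ) : ℝ) * 2 ^ m + 1 ≤ ((q.2 i : ℕ) : ℝ) + 2 + 2 ^ m := by exact_mod_cast n2'
  -- the two containment inequalities
  have g1' : (((q'.2 i : ℕ) : ℝ) - 3) * 2 ^ m ≤ ((q.2 i : ℕ) : ℝ) - 1 := by nlinarith [rn2, hM]
  have g2' : ((q.2 i : ℕ) : ℝ) + 2 ≤ (((q'.2 i : ℕ) : ℝ) + 4) * 2 ^ m := by nlinarith [rn1, hM]
  have e1 : (((q'.2 i : ℕ) : ℝ) - 3) * 2 ^ (-(k' : ℤ)) = ((((q'.2 i : ℕ) : ℝ) - 3) * 2 ^ m) * 2 ^ (-(k : ℤ)) := by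
    rw [hsplit]; ring
  have e2 : (((q'.2 i : ℕ) : ℝ) + 4) * 2 ^ (-(k' : ℤ)) = ((((q'.2 i : ℕ) : ℝ) + 4) * 2 ^ m) * 2 ^ (-(k : ℤ)) := by
    rw [hsplit]; ring
  constructor
  · rw [e1]
    calc ((((q'.2 i : ℕ) : ℝ) - 3) * 2 ^ m) * 2 ^ (-(k : ℤ)) ≤ (((q.2 i : ℕ) : ℝ) - 1) * 2 ^ (-(k : ℤ)) :=
        mul_le_mul_of_nonneg_right g1' ht.le
      _ ≤ y i := hyi.1
  · rw [e2]
    calc y i < (((q.2 i : ℕ) : ℝ) + 2) * 2 ^ (-(k : ℤ)) := hyi.2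
      _ ≤ ((((q'.2 i : ℕ) : ℝ) + 4) * 2 ^ m) * 2 ^ (-(k : ℤ)) := mul_le_mul_of_nonneg_right g2' ht.le

/-- The set of admissible colors at index `n`: colors avoiding all earlier neighbors. -/
def colSet (d : ℕ) (B : Set (DyIdx d)) (c : ℕ → ℕ) (n : ℕ) : Set ℕ :=
  {m : ℕ | ∀ q q' : DyIdx d, q ∈ B → q' ∈ B → phiIdx q = n →
      (idx3 q ∩ idx3 q').Nonempty → phiIdx q' < n → c (phiIdx q') ≠ m}

/-- Greedy coloring. -/
noncomputable def colAux (d : ℕ) (B : Set (DyIdx d)) : ℕ → ℕ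
  | n => sInf {m : ℕ | ∀ q q' : DyIdx d, q ∈ B → q' ∈ B → phiIdx q = n →
      (idx3 q ∩ idx3 q').Nonempty → ∀ _h : phiIdx q' < n, colAux d B (phiIdx q') ≠ m}
  decreasing_by exact _h

lemma colAux_eq (d : ℕ) (B : Set (DyIdx d)) (n : ℕ) :
    colAux d B n = sInf (colSet d B (colAux d B) n) := by
  rw [colAux]
  rfl

lemma colSet_nonempty (d : ℕ) (B : Set (DyIdx d)) (n : ℕ) :
    (colSet d B (colAux d B) n).Nonempty := by
  have hcompl : (colSet d B (colAux d B) n)ᶜ ⊆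
      (fun q' : DyIdx d => colAux d B (phiIdx q')) '' {q' | phiIdx q' < n} := by
    intro m hm
    simp only [colSet, Set.mem_compl_iff, Set.mem_setOf_eq, not_forall] at hm
    obtain ⟨q, q', _, _, _, _, hlt, hc⟩ := hm
    exact ⟨q', hlt, not_ne_iff.1 hc⟩
  have hfin : ((colSet d B (colAux d B) n)ᶜ).Finite :=
    Set.Finite.subset ((finite_phiIdx_lt n).image _) hcompl
  have := hfin.infinite_compl
  rw [compl_compl] at this
  exact this.nonempty

lemma colAux_mem (d : ℕ) (B : Set (DyIdx d)) (n : ℕ) :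
    colAux d B n ∈ colSet d B (colAux d B) n := by
  rw [colAux_eq]
  exact Nat.sInf_mem (colSet_nonempty d B n)

/-- **Coloring lemma.** If `B` is a countable collection of dyadic cubes of `[0,1]^d`
such that `3Q ∩ G ≠ ∅` for all `Q ∈ B` and each `x ∈ G` lies in at most `N` cubes `7Q`
with `Q ∈ B`, then `B` splits into `N` disjoint subcollections `𝒜₁, …, 𝒜_N`, within
each of which distinct cubes `Q, R` satisfy `3Q ∩ 3R = ∅`. -/
theorem coloring_of_cubes (d N : ℕ) (G : Set (EuclideanSpace ℝ (Fin d)))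
    (hG : G ⊆ unitCube d) (B : Set (DyIdx d)) (hBcount : B.Countable)
    (hmeet : ∀ q ∈ B, (idx3 q ∩ G).Nonempty)
    (hover : ∀ x ∈ G, ∀ S : Finset (DyIdx d),
      (↑S : Set (DyIdx d)) ⊆ B → (∀ q ∈ S, x ∈ idx7 q) → S.card ≤ N) :
    ∃ 𝒜 : Fin N → Set (DyIdx d),
      (∀ i, 𝒜 i ⊆ B) ∧
      (∀ i j, i ≠ j → 𝒜 i ∩ 𝒜 j = ∅) ∧
      (⋃ i, 𝒜 i) = B ∧
      ∀ i, ∀ q ∈ 𝒜 i, ∀ q' ∈ 𝒜 i, q ≠ q' → idx3 q ∩ idx3 q' = ∅ := by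
  classical
  set c : DyIdx d → ℕ := fun q => colAux d B (phiIdx q) with hcdef
  -- the color of every cube of `B` is `< N`
  have hlt : ∀ q ∈ B, c q < N := by
    intro q hq
    -- the set of earlier neighbors of q
    have hfin : {q' : DyIdx d | q' ∈ B ∧ phiIdx q' < phiIdx q ∧
        (idx3 q ∩ idx3 q').Nonempty}.Finite :=
      Set.Finite.subset (finite_phiIdx_lt (phiIdx q)) (fun q' h => h.2.1)
    set T : Finset (DyIdx d) := hfin.toFinset with hTdef
    have hTmem : ∀ q', q' ∈ T ↔ q' ∈ B ∧ phiIdx q' < phiIdx q ∧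
        (idx3 q ∩ idx3 q').Nonempty := fun q' => hfin.mem_toFinset
    have hqT : q ∉ T := by
      intro h
      exact absurd ((hTmem q).1 h).2.1 (lt_irrefl _)
    obtain ⟨x, hx3, hxG⟩ := hmeet q hq
    -- apply the overlap bound to `insert q T`
    have hcard : T.card + 1 ≤ N := by
      have := hover x hxG (insert q T) ?_ ?_
      · rwa [Finset.card_insert_of_notMem hqT] at this
      · intro p hp
        simp only [Finset.coe_insert, Set.mem_insert_iff, Finset.mem_coe] at hp
        rcases hp with rfl | hp
        · exact hq
        · exact ((hTmem p).1 hp).1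
      · intro p hp
        rcases Finset.mem_insert.1 hp with rfl | hp
        · exact idx3_subset_idx7_self p hx3
        · obtain ⟨_, hplt, hpne⟩ := (hTmem p).1 hp
          exact idx3_subset_idx7_of_le (scale_le_of_phiIdx_lt hplt) hpne hx3
    -- pick a color `< N` not used by the earlier neighbors
    set U : Finset ℕ := T.image (fun q' => colAux d B (phiIdx q')) with hUdef
    have hUcard : U.card < N := by
      have h1 : U.card ≤ T.card := Finset.card_image_le
      omega
    have hex : ∃ m ∈ Finset.range N, m ∉ U := by
      by_contra hcon
      push_neg at hcon
      have : Finset.range N ⊆ U := fun m hm => hcon m hm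
      have := Finset.card_le_card this
      rw [Finset.card_range] at this
      omega
    obtain ⟨m, hmN, hmU⟩ := hex
    have hmS : m ∈ colSet d B (colAux d B) (phiIdx q) := by
      intro q0 q' hq0 hq' heq hne hlt'
      have hq0q : q0 = q := phiIdx_injective heq
      subst hq0q
      intro hcontra
      apply hmU
      rw [hUdef]
      apply Finset.mem_image.2
      exact ⟨q', (hTmem q').2 ⟨hq', hlt', hne⟩, hcontra⟩
    have : c q ≤ m := by
      show colAux d B (phiIdx q) ≤ m
      rw [colAux_eq]
      exact Nat.sInf_le hmS
    have := Finset.mem_range.1 hmN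
    omega
  -- two distinct cubes of the same color have disjoint triples
  have hsep : ∀ q ∈ B, ∀ q' ∈ B, q ≠ q' → c q = c q' → idx3 q ∩ idx3 q' = ∅ := by
    intro q hq q' hq' hne hcc
    by_contra hcon
    have hne3 : (idx3 q ∩ idx3 q').Nonempty := Set.nonempty_iff_ne_empty.2 hcon
    have hne3' : (idx3 q' ∩ idx3 q).Nonempty := by
      rw [Set.inter_comm]; exact hne3
    have hphine : phiIdx q ≠ phiIdx q' := fun h => hne (phiIdx_injective h)
    rcases lt_or_gt_of_ne hphine with h | h
    · -- q earlier than q'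
      exact (colAux_mem d B (phiIdx q')) q' q hq' hq rfl hne3' h hcc
    · exact (colAux_mem d B (phiIdx q)) q q' hq hq' rfl hne3 h hcc.symm
  refine ⟨fun i => {q | q ∈ B ∧ c q = (i : ℕ)}, ?_, ?_, ?_, ?_⟩
  · intro i q hq; exact hq.1
  · intro i j hij
    ext q
    simp only [Set.mem_inter_iff, Set.mem_setOf_eq, Set.mem_empty_iff_false, iff_false]
    rintro ⟨⟨_, h1⟩, ⟨_, h2⟩⟩
    exact hij (Fin.ext (h1 ▸ h2 ▸ rfl))
  · ext q
    simp only [Set.mem_iUnion, Set.mem_setOf_eq]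
    constructor
    · rintro ⟨i, hqB, _⟩; exact hqB
    · intro hqB
      exact ⟨⟨c q, hlt q hqB⟩, hqB, rfl⟩
  · intro i q hq q' hq' hne
    exact hsep q hq.1 q' hq'.1 hne (hq.2.trans hq'.2.symm)
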